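/- Let x ∈ ℝ^d with ℓ1-norm ||x||₁ = 1 and let y ∈ Δ_d (the probability simplex). Suppose ||x - y||₁ < ε for some ε > 0. Then there exists x' ∈ Δ_d which is an ℓ1-projection of x onto Δ_d (i.e., x' minimizes ||z - x||₁ over z ∈ Δ_d) satisfying ||x' - y||₁ < ε. In particular, there exists x' ∈ Δ_d with Σᵢ|x'ᵢ - xᵢ| minimal among all points of Δ_d and Σᵢ|x'ᵢ - yᵢ| < ε. -/

import Mathlib

/-- If `‖x‖₁ = 1` and `y` is in the probability simplex with `‖x - y‖₁ < ε`, then there is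
an ℓ1-projection `x'` of `x` onto the simplex with `‖x' - y‖₁ < ε`. -/
theorem l1_projection_close {d : ℕ} (hd : 2 ≤ d)
    (x y : Fin d → ℝ) (ε : ℝ) (hε : 0 < ε)
    (hx : ∑ i, |x i| = 1)
    (hy0 : ∀ i, 0 ≤ y i) (hy1 : ∑ i, y i = 1)
    (hxy : ∑ i, |x i - y i| < ε) :
    ∃ x' : Fin d → ℝ, (∀ i, 0 ≤ x' i) ∧ (∑ i, x' i = 1) ∧
      (∀ z : Fin d → ℝ, (∀ i, 0 ≤ z i) → ∑ i, z i = 1 →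
        ∑ i, |x' i - x i| ≤ ∑ i, |z i - x i|) ∧
      ∑ i, |x' i - y i| < ε := by
  set m : Fin d → ℝ := fun i => max (x i) 0 with hm
  set s : ℝ := 1 - ∑ i, m i with hsdef
  set r : Fin d → ℝ := fun i => max (y i - m i) 0 with hr
  set R : ℝ := ∑ i, r i with hRdef
  set c : ℝ := s / R with hcdef
  have hm_x : ∀ i, x i ≤ m i := fun i => le_max_left _ _
  have hm0 : ∀ i, 0 ≤ m i := fun i => le_max_right _ _
  have hr0 : ∀ i, 0 ≤ r i := fun i => le_max_right _ _
  have hs0 : 0 ≤ s := by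
    have h1 : ∑ i, m i ≤ ∑ i, |x i| :=
      Finset.sum_le_sum fun i _ => max_le (le_abs_self _) (abs_nonneg _)
    rw [hx] at h1; linarith [h1]
  have hsR : s ≤ R := by
    have h1 : ∑ i, (y i - m i) ≤ ∑ i, r i :=
      Finset.sum_le_sum fun i _ => le_max_left _ _
    rw [Finset.sum_sub_distrib, hy1] at h1
    simp only [hRdef, hsdef]; linarith
  have hR0 : 0 ≤ R := hs0.trans hsR
  have hc0 : 0 ≤ c := div_nonneg hs0 hR0
  have hc1 : c ≤ 1 := by
    rcases eq_or_lt_of_le hR0 with h | h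
    · simp [hcdef, ← h]
    · exact (div_le_one h).2 hsR
  have hcR : c * R = s := by
    rcases eq_or_lt_of_le hR0 with h | h
    · have hs : s = 0 := le_antisymm (hsR.trans_eq h.symm) hs0
      simp [← h, hs]
    · rw [hcdef]; exact div_mul_cancel₀ s (ne_of_gt h)
  refine ⟨fun i => m i + c * r i, ?_, ?_, ?_, ?_⟩
  · exact fun i => add_nonneg (hm0 i) (mul_nonneg hc0 (hr0 i))
  · rw [Finset.sum_add_distrib, ← Finset.mul_sum, ← hRdef, hcR]
    simp [hsdef]
  · intro z hz0 hz1
    have hle : ∀ i, x i ≤ m i + c * r i := fun i =>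
      (hm_x i).trans (le_add_of_nonneg_right (mul_nonneg hc0 (hr0 i)))
    have h1 : ∑ i, |m i + c * r i - x i| = ∑ i, (m i + c * r i - x i) :=
      Finset.sum_congr rfl fun i _ => abs_of_nonneg (by linarith [hle i])
    have h2 : ∑ i, (z i - x i) ≤ ∑ i, |z i - x i| :=
      Finset.sum_le_sum fun i _ => le_abs_self _
    have h3 : ∑ i, (m i + c * r i) = 1 := by
      rw [Finset.sum_add_distrib, ← Finset.mul_sum, ← hRdef, hcR]
      simp [hsdef]
    rw [h1, Finset.sum_sub_distrib, h3]
    rw [Finset.sum_sub_distrib, hz1] at h2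
    linarith
  · have key : ∀ i, |m i + c * r i - y i| ≤ |x i - y i| := by
      intro i
      have hcr : c * r i ≤ r i := mul_le_of_le_one_left (hr0 i) hc1
      have hcr0 : 0 ≤ c * r i := mul_nonneg hc0 (hr0 i)
      rw [abs_le]
      constructor
      · have h : y i - x i ≤ |x i - y i| := by
          rw [abs_sub_comm]; exact le_abs_self _
        have := hm_x i
        linarith
      · rcases le_total (y i) (m i) with h | h
        · have hri : r i = 0 := max_eq_right (by linarith : y i - m i ≤ 0)
          rcases le_total (x i) 0 with hx0 | hx0
          · have hmi : m i = 0 := max_eq_right hx0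
            have hyi := hy0 i
            have h2 : y i - x i ≤ |x i - y i| := by
              rw [abs_sub_comm]; exact le_abs_self _
            rw [hri, hmi]
            linarith
          · have hmi : m i = x i := max_eq_left hx0
            have h2 : x i - y i ≤ |x i - y i| := le_abs_self _
            rw [hri, hmi]
            linarith
        · have hri : r i = y i - m i := max_eq_left (by linarith : 0 ≤ y i - m i)
          have h2 : m i + c * r i ≤ y i := by rw [hri] at hcr ⊢; linarith
          linarith [abs_nonneg (x i - y i)]
    calc ∑ i, |m i + c * r i - y i| ≤ ∑ i, |x i - y i| :=
          Finset.sum_le_sum fun i _ => key i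
      _ < ε := hxy
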